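/- For all r ≥ 3, m̃'_2(r) ≤ 2·m̃'_2(r−1): given a unary (r−1)-uniform family of size m with no coloring, one can construct a unary r-uniform family of size 2m with no coloring. -/

import Mathlib

open Finset

/-- The domain of a partial map `φ : X ⇀ Bool` (encoded as `X → Option Bool`). -/
def pdom {X : Type*} [Fintype X] (φ : X → Option Bool) : Finset X :=
  Finset.univ.filter (fun x => (φ x).isSome)

/-- A total function `f : X → Bool` extends the partial map `φ`. -/
def PExtends {X : Type*} (f : X → Bool) (φ : X → Option Bool) : Prop :=
  ∀ x b, φ x = some b → f x = b

instance {X : Type*} [Fintype X] (f : X → Bool) : DecidablePred (PExtends f) :=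
  fun φ => inferInstanceAs (Decidable (∀ x b, φ x = some b → f x = b))

/-- The weight of a family of partial maps: `∑ 2^{-|dom φ|}`. -/
noncomputable def weight {X : Type*} [Fintype X] (F : Finset (X → Option Bool)) : ℝ :=
  ∑ φ ∈ F, (1/2 : ℝ) ^ (pdom φ).card

/-- `F` is a 2-fold cover of the hypergraph `H`. -/
def IsCover {X : Type*} [Fintype X] (H : Finset (Finset X)) (F : Finset (X → Option Bool)) : Prop :=
  (∀ φ ∈ F, pdom φ ∈ H) ∧
  (∀ φ ∈ F, ∀ ψ ∈ F, φ ≠ ψ → pdom φ = pdom ψ → ∀ x ∈ pdom φ, φ x ≠ ψ x)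

namespace Stmt16Aux

variable (n : ℕ)

def z : Fin (2*n+1) := ⟨2*n, by omega⟩

def liftA (φ : Fin n → Option Bool) : Fin (2*n+1) → Option Bool :=
  fun x => if h : (x:ℕ) < n then φ ⟨x, h⟩ else if (x:ℕ) = 2*n then some false else none

def liftB (φ : Fin n → Option Bool) : Fin (2*n+1) → Option Bool :=
  fun x => if h : n ≤ (x:ℕ) ∧ (x:ℕ) < 2*n then φ ⟨(x:ℕ) - n, by omega⟩
    else if (x:ℕ) = 2*n then some true else none

def e1 : Fin n ↪ Fin (2*n+1) :=
  ⟨fun i => ⟨i, by omega⟩, fun a b hab => by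
    apply Fin.ext; simpa [Fin.ext_iff] using hab⟩

def e2 : Fin n ↪ Fin (2*n+1) :=
  ⟨fun i => ⟨n + i, by omega⟩, fun a b hab => by
    apply Fin.ext; simpa [Fin.ext_iff] using hab⟩

lemma pdomA (φ : Fin n → Option Bool) :
    pdom (liftA n φ) = insert (z n) ((pdom φ).map (e1 n)) := by
  ext x
  simp only [pdom, mem_filter, mem_univ, true_and]
  simp only [pdom, liftA, mem_filter, mem_univ, true_and, mem_insert, mem_map, e1,
    Function.Embedding.coeFn_mk]
  by_cases hx : (x:ℕ) < n
  · rw [dif_pos hx]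
    constructor
    · intro hs
      right
      exact ⟨⟨x, hx⟩, by simpa using hs, Fin.ext rfl⟩
    · rintro (hz | ⟨i, hi, rfl⟩)
      · exfalso; have := congrArg Fin.val hz; simp [z] at this; omega
      · exact hi
  · rw [dif_neg hx]
    by_cases hx2 : (x:ℕ) = 2*n
    · rw [if_pos hx2]
      simp only [Option.isSome_some, true_iff]
      left; exact Fin.ext hx2
    · rw [if_neg hx2]
      simp only [Option.isSome_none, Bool.false_eq_true, false_iff]
      push_neg
      constructor
      · intro hz; exact hx2 (congrArg Fin.val hz)
      · rintro i hi hix; apply hx; rw [← congrArg Fin.val hix]; exact i.isLt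

lemma pdomB (φ : Fin n → Option Bool) :
    pdom (liftB n φ) = insert (z n) ((pdom φ).map (e2 n)) := by
  ext x
  simp only [pdom, mem_filter, mem_univ, true_and]
  simp only [pdom, liftB, mem_filter, mem_univ, true_and, mem_insert, mem_map, e2,
    Function.Embedding.coeFn_mk]
  by_cases hx : n ≤ (x:ℕ) ∧ (x:ℕ) < 2*n
  · rw [dif_pos hx]
    constructor
    · intro hs
      right
      exact ⟨⟨(x:ℕ) - n, by omega⟩, by simpa using hs, Fin.ext (by change n + ((x:ℕ) - n) = x; omega)⟩
    · rintro (hz | ⟨i, hi, rfl⟩)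
      · exfalso; have := congrArg Fin.val hz; simp [z] at this; omega
      · convert hi using 3
        apply Fin.ext
        change n + (i:ℕ) - n = i; omega
  · rw [dif_neg hx]
    by_cases hx2 : (x:ℕ) = 2*n
    · rw [if_pos hx2]
      simp only [Option.isSome_some, true_iff]
      left; exact Fin.ext hx2
    · rw [if_neg hx2]
      simp only [Option.isSome_none, Bool.false_eq_true, false_iff]
      push_neg
      constructor
      · intro hz; exact hx2 (congrArg Fin.val hz)
      · rintro i hi hix
        apply hx
        have := congrArg Fin.val hix
        change n + (i:ℕ) = x at this
        omega

lemma z_not_mem_mapA (s : Finset (Fin n)) : z n ∉ s.map (e1 n) := by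
  simp only [mem_map, e1, Function.Embedding.coeFn_mk]
  rintro ⟨i, hi, hiz⟩
  have := congrArg Fin.val hiz
  simp [z] at this
  change (i:ℕ) = 2*n at this
  omega

lemma z_not_mem_mapB (s : Finset (Fin n)) : z n ∉ s.map (e2 n) := by
  simp only [mem_map, e2, Function.Embedding.coeFn_mk]
  rintro ⟨i, hi, hiz⟩
  have := congrArg Fin.val hiz
  simp [z] at this
  change n + (i:ℕ) = 2*n at this
  omega

lemma injA : Function.Injective (liftA n) := by
  intro φ ψ hq
  funext i
  have := congrFun hq ⟨i, by omega⟩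
  simpa [liftA, i.isLt] using this

lemma injB : Function.Injective (liftB n) := by
  intro φ ψ hq
  funext i
  have := congrFun hq ⟨n + i, by omega⟩
  have h1 : n ≤ n + (i:ℕ) ∧ n + (i:ℕ) < 2*n := by omega
  rw [liftB, liftB, dif_pos h1, dif_pos h1] at this
  convert this using 2 <;> (apply Fin.ext; simp)

lemma valA (φ : Fin n → Option Bool) : liftA n φ (z n) = some false := by
  rw [liftA]; rw [dif_neg (by simp [z]; omega), if_pos (by simp [z])]

lemma valB (φ : Fin n → Option Bool) : liftB n φ (z n) = some true := by
  rw [liftB]; rw [dif_neg (by simp [z]), if_pos (by simp [z])]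

end Stmt16Aux

theorem stmt_16 (r m : ℕ) (hr : 3 ≤ r) (n : ℕ) (F : Finset (Fin n → Option Bool))
    (huniform : ∀ φ ∈ F, (pdom φ).card = r - 1)
    (hunary : ∀ φ ∈ F, ∀ ψ ∈ F, pdom φ = pdom ψ → φ = ψ)
    (hcard : F.card = m)
    (h : ∀ f : Fin n → Bool, ∃ φ ∈ F, PExtends f φ) :
    ∃ (n' : ℕ) (F' : Finset (Fin n' → Option Bool)),
      (∀ φ ∈ F', (pdom φ).card = r) ∧
      (∀ φ ∈ F', ∀ ψ ∈ F', pdom φ = pdom ψ → φ = ψ) ∧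
      F'.card = 2 * m ∧
      (∀ f : Fin n' → Bool, ∃ φ ∈ F', PExtends f φ) := by
  classical
  open Stmt16Aux in
  refine ⟨2*n+1, F.map ⟨liftA n, injA n⟩ ∪ F.map ⟨liftB n, injB n⟩, ?_, ?_, ?_, ?_⟩
  · rintro φ hφ
    rw [mem_union, mem_map, mem_map] at hφ
    rcases hφ with ⟨ψ, hψ, rfl⟩ | ⟨ψ, hψ, rfl⟩
    · simp only [Function.Embedding.coeFn_mk]
      rw [pdomA, card_insert_of_notMem (z_not_mem_mapA n _), card_map, huniform ψ hψ]
      omega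
    · simp only [Function.Embedding.coeFn_mk]
      rw [pdomB, card_insert_of_notMem (z_not_mem_mapB n _), card_map, huniform ψ hψ]
      omega
  · rintro φ hφ ψ hψ hpdom
    rw [mem_union, mem_map, mem_map] at hφ hψ
    -- get an element of pdom < n or ≥ n to separate cases
    rcases hφ with ⟨φ₀, hφ₀, rfl⟩ | ⟨φ₀, hφ₀, rfl⟩ <;>
      rcases hψ with ⟨ψ₀, hψ₀, rfl⟩ | ⟨ψ₀, hψ₀, rfl⟩ <;>
      simp only [Function.Embedding.coeFn_mk] at hpdom ⊢
    · rw [pdomA, pdomA] at hpdom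
      have : (pdom φ₀).map (e1 n) = (pdom ψ₀).map (e1 n) := by
        have := congrArg (Finset.erase · (z n)) hpdom
        simpa [erase_insert_eq_erase,
          Finset.erase_eq_of_notMem (z_not_mem_mapA n _)] using this
      exact congrArg _ (hunary _ hφ₀ _ hψ₀ (Finset.map_inj.mp this))
    · -- A vs B: impossible since pdom φ₀ nonempty has small element
      exfalso
      have hne : (pdom φ₀).Nonempty := by
        rw [← Finset.card_pos, huniform _ hφ₀]; omega
      obtain ⟨i, hi⟩ := hne
      have h1 : (e1 n i) ∈ pdom (liftA n φ₀) := by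
        rw [pdomA]; exact mem_insert_of_mem (mem_map_of_mem _ hi)
      rw [hpdom, pdomB] at h1
      rcases mem_insert.mp h1 with hz | hm
      · have := congrArg Fin.val hz; simp [e1, z] at this; change (i:ℕ) = 2*n at this; omega
      · rw [mem_map] at hm
        obtain ⟨j, hj, hij⟩ := hm
        have := congrArg Fin.val hij
        simp [e1, e2] at this
        change n + (j:ℕ) = i at this
        omega
    · exfalso
      have hne : (pdom φ₀).Nonempty := by
        rw [← Finset.card_pos, huniform _ hφ₀]; omega
      obtain ⟨i, hi⟩ := hne
      have h1 : (e2 n i) ∈ pdom (liftB n φ₀) := by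
        rw [pdomB]; exact mem_insert_of_mem (mem_map_of_mem _ hi)
      rw [hpdom, pdomA] at h1
      rcases mem_insert.mp h1 with hz | hm
      · have := congrArg Fin.val hz; simp [e2, z] at this; change n + (i:ℕ) = 2*n at this; omega
      · rw [mem_map] at hm
        obtain ⟨j, hj, hij⟩ := hm
        have := congrArg Fin.val hij
        simp [e1, e2] at this
        change (j:ℕ) = n + i at this
        omega
    · rw [pdomB, pdomB] at hpdom
      have : (pdom φ₀).map (e2 n) = (pdom ψ₀).map (e2 n) := by
        have := congrArg (Finset.erase · (z n)) hpdom
        simpa [erase_insert_eq_erase,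
          Finset.erase_eq_of_notMem (z_not_mem_mapB n _)] using this
      exact congrArg _ (hunary _ hφ₀ _ hψ₀ (Finset.map_inj.mp this))
  · rw [card_union_of_disjoint, card_map, card_map, hcard]
    · ring
    · rw [Finset.disjoint_left]
      rintro φ hφ hφ'
      rw [mem_map] at hφ hφ'
      obtain ⟨a, _, rfl⟩ := hφ
      obtain ⟨b, _, hab⟩ := hφ'
      have := congrFun hab (z n)
      simp only [Function.Embedding.coeFn_mk] at this
      rw [valA, valB] at this
      simp at this
  · intro f
    by_cases hf : f (z n) = false
    · obtain ⟨φ, hφ, hext⟩ := h (fun i => f ⟨i, by omega⟩)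
      refine ⟨liftA n φ, mem_union_left _ (mem_map_of_mem _ hφ), ?_⟩
      intro x b hx
      rw [liftA] at hx
      by_cases hxn : (x:ℕ) < n
      · rw [dif_pos hxn] at hx
        exact hext ⟨x, hxn⟩ b hx
      · rw [dif_neg hxn] at hx
        by_cases hx2 : (x:ℕ) = 2*n
        · rw [if_pos hx2] at hx
          have hxz : x = z n := Fin.ext hx2
          rw [hxz, hf]
          exact Option.some_inj.mp hx
        · rw [if_neg hx2] at hx; exact absurd hx (by simp)
    · replace hf : f (z n) = true := by simpa using hf
      obtain ⟨φ, hφ, hext⟩ := h (fun i => f ⟨n + i, by omega⟩)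
      refine ⟨liftB n φ, mem_union_right _ (mem_map_of_mem _ hφ), ?_⟩
      intro x b hx
      rw [liftB] at hx
      by_cases hxn : n ≤ (x:ℕ) ∧ (x:ℕ) < 2*n
      · rw [dif_pos hxn] at hx
        have := hext ⟨(x:ℕ) - n, by omega⟩ b hx
        convert this using 2
        apply Fin.ext; simp; omega
      · rw [dif_neg hxn] at hx
        by_cases hx2 : (x:ℕ) = 2*n
        · rw [if_pos hx2] at hx
          have hxz : x = z n := Fin.ext hx2
          rw [hxz, hf]
          exact Option.some_inj.mp hx
        · rw [if_neg hx2] at hx; exact absurd hx (by simp)
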